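/- Let (E,z) be a gradient pair for H ∈ C¹(X,ℝ) on an open set X ⊆ ℝⁿ, and suppose there exist an open set X̃ = X̃₁ × X̃₂ ⊆ ℝ^{n₁} × ℝ^{n₂} with X̃₂ convex, a diffeomorphism φ ∈ C¹(X̃,X), and a continuous pointwise invertible U : X̃ → ℝ^{n×n} such that the transformed pair (Uᵀ(E∘φ)Dφ, U^{-1}(z∘φ)) is a semi-explicit gradient pair. Then the rank of E(x) equals n₁ for every x ∈ X; in particular, E has constant rank on X. -/

import Mathlib

open Matrix Set

def basisP {n1 n2 : ℕ} (j : Fin n1 ⊕ Fin n2) : (Fin n1 → ℝ) × (Fin n2 → ℝ) :=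
  Sum.elim (fun j1 => (Pi.single j1 1, 0)) (fun j2 => (0, Pi.single j2 1)) j

noncomputable def gradP {n1 n2 : ℕ} (f : ((Fin n1 → ℝ) × (Fin n2 → ℝ)) → ℝ)
    (x : (Fin n1 → ℝ) × (Fin n2 → ℝ)) : Fin n1 ⊕ Fin n2 → ℝ :=
  fun i => fderiv ℝ f x (basisP i)

noncomputable def jacP {n1 n2 : ℕ}
    (f : ((Fin n1 → ℝ) × (Fin n2 → ℝ)) → ((Fin n1 → ℝ) × (Fin n2 → ℝ)))
    (x : (Fin n1 → ℝ) × (Fin n2 → ℝ)) :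
    Matrix (Fin n1 ⊕ Fin n2) (Fin n1 ⊕ Fin n2) ℝ :=
  Matrix.of fun i j =>
    Sum.elim (fderiv ℝ f x (basisP j)).1 (fderiv ℝ f x (basisP j)).2 i

-- auxiliary
noncomputable def toMatP {n1 n2 : ℕ}
    (L : ((Fin n1 → ℝ) × (Fin n2 → ℝ)) →L[ℝ] ((Fin n1 → ℝ) × (Fin n2 → ℝ))) :
    Matrix (Fin n1 ⊕ Fin n2) (Fin n1 ⊕ Fin n2) ℝ :=
  Matrix.of fun i j => Sum.elim (L (basisP j)).1 (L (basisP j)).2 i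

lemma decompP {n1 n2 : ℕ} (v : (Fin n1 → ℝ) × (Fin n2 → ℝ)) :
    ∑ k, Sum.elim v.1 v.2 k • basisP k = v := by
  rw [Fintype.sum_sum_type]
  refine Prod.ext ?_ ?_ <;>
    simp [basisP, Prod.fst_sum, Prod.snd_sum, ← Pi.single_smul, Finset.univ_sum_single]

lemma toMatP_id {n1 n2 : ℕ} :
    toMatP (ContinuousLinearMap.id ℝ ((Fin n1 → ℝ) × (Fin n2 → ℝ))) = 1 := by
  ext i j
  rcases i with i | i <;> rcases j with j | j <;>
    simp [toMatP, basisP, Matrix.one_apply, Pi.single_apply, eq_comm]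

lemma toMatP_comp {n1 n2 : ℕ}
    (L K : ((Fin n1 → ℝ) × (Fin n2 → ℝ)) →L[ℝ] ((Fin n1 → ℝ) × (Fin n2 → ℝ))) :
    toMatP (L.comp K) = toMatP L * toMatP K := by
  ext i j
  rw [Matrix.mul_apply]
  have hK : K (basisP j) = ∑ k, toMatP K k j • basisP k := (decompP (K (basisP j))).symm
  have : (L.comp K) (basisP j) = ∑ k, toMatP K k j • L (basisP k) := by
    rw [ContinuousLinearMap.comp_apply, hK, map_sum]
    simp
  rcases i with i | i
  · show ((L.comp K) (basisP j)).1 i = _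
    rw [this, Prod.fst_sum, Finset.sum_apply]
    refine Finset.sum_congr rfl fun k _ => ?_
    show (toMatP K k j • L (basisP k)).1 i = toMatP L (Sum.inl i) k * toMatP K k j
    simp [toMatP, mul_comm]
  · show ((L.comp K) (basisP j)).2 i = _
    rw [this, Prod.snd_sum, Finset.sum_apply]
    refine Finset.sum_congr rfl fun k _ => ?_
    show (toMatP K k j • L (basisP k)).2 i = toMatP L (Sum.inr i) k * toMatP K k j
    simp [toMatP, mul_comm]

lemma rank_fromBlocks_unit_zero {n1 n2 : ℕ} (A : Matrix (Fin n1) (Fin n1) ℝ)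
    (hA : IsUnit A.det) :
    (Matrix.fromBlocks A 0 0 0 : Matrix (Fin n1 ⊕ Fin n2) (Fin n1 ⊕ Fin n2) ℝ).rank = n1 := by
  have h1 : (Matrix.fromBlocks A 0 0 0 : Matrix (Fin n1 ⊕ Fin n2) (Fin n1 ⊕ Fin n2) ℝ)
      = Matrix.fromBlocks A 0 0 1 * Matrix.fromBlocks 1 0 0 0 := by
    rw [Matrix.fromBlocks_multiply]; simp
  have hdet : IsUnit (Matrix.fromBlocks A 0 0 (1 : Matrix (Fin n2) (Fin n2) ℝ)).det := by
    rw [Matrix.det_fromBlocks_zero₂₁]; simpa using hA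
  rw [h1, Matrix.rank_mul_eq_right_of_isUnit_det _ _ hdet]
  have h2 : (Matrix.fromBlocks 1 0 0 0 : Matrix (Fin n1 ⊕ Fin n2) (Fin n1 ⊕ Fin n2) ℝ)
      = Matrix.diagonal (Sum.elim (fun _ => (1:ℝ)) (fun _ => 0)) := by
    rw [← Matrix.fromBlocks_diagonal]
    congr <;> simp [Matrix.diagonal_one]
  rw [h2, Matrix.rank_diagonal]
  have e : {i : Fin n1 ⊕ Fin n2 // Sum.elim (fun _ => (1:ℝ)) (fun _ => 0) i ≠ 0} ≃ Fin n1 := by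
    refine ⟨fun x => match x with
    | ⟨Sum.inl i, _⟩ => i
    | ⟨Sum.inr i, h⟩ => (h rfl).elim,
      fun i => ⟨Sum.inl i, by simp⟩, ?_, ?_⟩
    · rintro ⟨i | i, h⟩
      · rfl
      · exact (h rfl).elim
    · intro i; rfl
  rw [Fintype.card_congr e, Fintype.card_fin]

/-- if a gradient pair can be transformed to semi-explicit form by an
invertible system transformation, then its descriptor matrix has constant rank `n₁`. -/
theorem semiExplicit_implies_constant_rank {n1 n2 : ℕ}
    (X : Set ((Fin n1 → ℝ) × (Fin n2 → ℝ))) (hX : IsOpen X)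
    (H : ((Fin n1 → ℝ) × (Fin n2 → ℝ)) → ℝ) (hH : ContDiffOn ℝ 1 H X)
    (E : ((Fin n1 → ℝ) × (Fin n2 → ℝ)) → Matrix (Fin n1 ⊕ Fin n2) (Fin n1 ⊕ Fin n2) ℝ)
    (z : ((Fin n1 → ℝ) × (Fin n2 → ℝ)) → (Fin n1 ⊕ Fin n2 → ℝ))
    (hEcont : ContinuousOn E X) (hzcont : ContinuousOn z X)
    (hgradpair : ∀ x ∈ X, (E x)ᵀ.mulVec (z x) = gradP H x)
    (Xt1 : Set (Fin n1 → ℝ)) (Xt2 : Set (Fin n2 → ℝ))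
    (hXt1 : IsOpen Xt1) (hXt2 : IsOpen Xt2) (hXt2conv : Convex ℝ Xt2)
    (φ ψ : ((Fin n1 → ℝ) × (Fin n2 → ℝ)) → ((Fin n1 → ℝ) × (Fin n2 → ℝ)))
    (hφ : ContDiffOn ℝ 1 φ (Xt1 ×ˢ Xt2)) (hφmap : Set.MapsTo φ (Xt1 ×ˢ Xt2) X)
    (hψ : ContDiffOn ℝ 1 ψ X) (hψmap : Set.MapsTo ψ X (Xt1 ×ˢ Xt2))
    (hψφ : ∀ xt ∈ Xt1 ×ˢ Xt2, ψ (φ xt) = xt) (hφψ : ∀ x ∈ X, φ (ψ x) = x)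
    (U : ((Fin n1 → ℝ) × (Fin n2 → ℝ)) → Matrix (Fin n1 ⊕ Fin n2) (Fin n1 ⊕ Fin n2) ℝ)
    (hUcont : ContinuousOn U (Xt1 ×ˢ Xt2))
    (hUinv : ∀ xt ∈ Xt1 ×ˢ Xt2, IsUnit (U xt).det)
    -- the transformed gradient pair is semi-explicit
    (E11t : ((Fin n1 → ℝ) × (Fin n2 → ℝ)) → Matrix (Fin n1) (Fin n1) ℝ)
    (hE11tcont : ContinuousOn E11t (Xt1 ×ˢ Xt2))
    (hE11tinv : ∀ xt ∈ Xt1 ×ˢ Xt2, IsUnit (E11t xt).det)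
    (hsemi : ∀ xt ∈ Xt1 ×ˢ Xt2,
      (U xt)ᵀ * E (φ xt) * jacP φ xt
        = (Matrix.fromBlocks (E11t xt) 0 0 0 :
            Matrix (Fin n1 ⊕ Fin n2) (Fin n1 ⊕ Fin n2) ℝ)) :
    ∀ x ∈ X, (E x).rank = n1 := by
  
  intro x hx
  have hXt : IsOpen (Xt1 ×ˢ Xt2) := hXt1.prod hXt2
  have hxt : ψ x ∈ Xt1 ×ˢ Xt2 := hψmap hx
  have hφx : φ (ψ x) = x := hφψ x hx
  have hdφ : DifferentiableAt ℝ φ (ψ x) :=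
    (hφ.differentiableOn one_ne_zero).differentiableAt (hXt.mem_nhds hxt)
  have hdψ : DifferentiableAt ℝ ψ x :=
    (hψ.differentiableOn one_ne_zero).differentiableAt (hX.mem_nhds hx)
  have hcomp : fderiv ℝ (φ ∘ ψ) x = (fderiv ℝ φ (ψ x)).comp (fderiv ℝ ψ x) :=
    fderiv_comp (x := x) hdφ hdψ
  have hev : (φ ∘ ψ) =ᶠ[nhds x] id := by
    filter_upwards [hX.mem_nhds hx] with y hy using hφψ y hy
  have hid : fderiv ℝ (φ ∘ ψ) x = ContinuousLinearMap.id ℝ _ := by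
    rw [hev.fderiv_eq, fderiv_id]
  have hone : jacP φ (ψ x) * jacP ψ x = 1 := by
    calc jacP φ (ψ x) * jacP ψ x
        = toMatP ((fderiv ℝ φ (ψ x)).comp (fderiv ℝ ψ x)) := (toMatP_comp _ _).symm
      _ = 1 := by rw [← hcomp, hid, toMatP_id]
  have hjac : IsUnit (jacP φ (ψ x)).det := Matrix.isUnit_det_of_right_inverse hone
  have hsemi' := hsemi (ψ x) hxt
  rw [hφx] at hsemi'
  have hU : IsUnit ((U (ψ x))ᵀ).det := by
    rw [Matrix.det_transpose]; exact hUinv _ hxt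
  calc (E x).rank = ((U (ψ x))ᵀ * E x * jacP φ (ψ x)).rank := by
        rw [Matrix.rank_mul_eq_left_of_isUnit_det _ _ hjac,
          Matrix.rank_mul_eq_right_of_isUnit_det _ _ hU]
    _ = n1 := by rw [hsemi']; exact rank_fromBlocks_unit_zero _ (hE11tinv _ hxt)
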